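/- (Theorem 2.1, fourth identity, q-case: joint q-factorial moments.) Let n ∈ ℕ, α₁, α₂ ∈ (0,1), and let m₁, m₂ be natural numbers with m₂ ≤ n and m₁ ≤ n − m₂. Then ∑_{y₁=0}^{n} ∑_{y₂=0}^{n−y₁} [y₁]_{m₁,q} · [y₂]_{m₂,q} · f(y₁,y₂) = [n]_{m₁+m₂,q} · α₁^{m₁} · α₂^{m₂} · q^{b(m₁)+b(m₂)} / ( ⟨1⊕α₁⟩_{m₁} · ⟨1⊕α₂⟩_{m₂} · ∏_{i=1}^{m₂} (1 + α₁·q^{n−m₂+i−1}) ). -/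

import Mathlib

open Finset

/-- q-integer `[k]_q = (1 - q^k)/(1 - q)`. -/
noncomputable def qInt (q : ℝ) (k : ℤ) : ℝ := (1 - q ^ k) / (1 - q)

/-- q-factorial `[n]_q! = ∏_{i=1}^n [i]_q`. -/
noncomputable def qFact (q : ℝ) (n : ℕ) : ℝ := ∏ i ∈ Finset.Icc 1 n, qInt q (i : ℤ)

/-- q-binomial coefficient `C_q(n,k)`. -/
noncomputable def qBinom (q : ℝ) (n k : ℕ) : ℝ := qFact q n / (qFact q k * qFact q (n - k))

/-- q-falling factorial `[u]_{m,q} = ∏_{i=1}^m [u-i+1]_q`. -/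
noncomputable def qFall (q : ℝ) (u : ℤ) (m : ℕ) : ℝ := ∏ i ∈ Finset.Icc 1 m, qInt q (u - (i : ℤ) + 1)

/-- `[k]_{q⁻¹} = q^{1-k} · [k]_q`. -/
noncomputable def qIntInv (q : ℝ) (k : ℤ) : ℝ := q ^ (1 - k) * qInt q k

/-- `[u]_{m,q⁻¹} = ∏_{i=1}^m [u-i+1]_{q⁻¹}`. -/
noncomputable def qFallInv (q : ℝ) (u : ℤ) (m : ℕ) : ℝ := ∏ i ∈ Finset.Icc 1 m, qIntInv q (u - (i : ℤ) + 1)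

/-- `b(k) = k(k-1)/2`. -/
def bb (k : ℕ) : ℕ := k * (k - 1) / 2

/-- `⟨1 ⊕ α⟩_m = ∏_{i=1}^m (1 + α q^{i-1})`. -/
noncomputable def oplus (q α : ℝ) (m : ℕ) : ℝ := ∏ i ∈ Finset.Icc 1 m, (1 + α * q ^ (i - 1))

/-- `⟨1 ⊖ β⟩_m = ∏_{i=1}^m (1 - β q^{i-1})`. -/
noncomputable def ominus (q β : ℝ) (m : ℕ) : ℝ := ∏ i ∈ Finset.Icc 1 m, (1 - β * q ^ (i - 1))

/-- q-trinomial coefficient `T_q(n; x₁, x₂)`. -/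
noncomputable def qTri (q : ℝ) (n x1 x2 : ℕ) : ℝ :=
  qFact q n / (qFact q x1 * qFact q x2 * qFact q (n - x1 - x2))

/-- pmf of the q-trinomial distribution of the first kind. -/
noncomputable def fpmf (q a1 a2 : ℝ) (n y1 y2 : ℕ) : ℝ :=
  qTri q n y1 y2 * a1 ^ y1 * a2 ^ y2 * q ^ (bb y1 + bb y2) /
    (oplus q a1 n * oplus q a2 (n - y1))

section Helpers

variable {q : ℝ}

lemma qInt_natCast (k : ℕ) : qInt q (k : ℤ) = (1 - q ^ k) / (1 - q) := by
  rw [qInt, zpow_natCast]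

lemma qInt_zero : qInt q 0 = 0 := by simp [qInt]

lemma qInt_pos (hq0 : 0 < q) (hq1 : q < 1) {k : ℕ} (hk : 1 ≤ k) : 0 < qInt q (k : ℤ) := by
  rw [qInt_natCast]
  have h1 : q ^ k < 1 := pow_lt_one₀ hq0.le hq1 (by omega)
  apply div_pos <;> linarith

lemma qInt_add (hq0 : 0 < q) (hq1 : q < 1) (a b : ℤ) :
    qInt q (a + b) = qInt q a + q ^ a * qInt q b := by
  have hq : q ≠ 0 := hq0.ne'
  have h1 : (1:ℝ) - q ≠ 0 := by linarith
  rw [qInt, qInt, qInt, zpow_add₀ hq]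
  field_simp
  ring

lemma qFact_zero : qFact q 0 = 1 := by simp [qFact]

lemma qFact_succ (n : ℕ) : qFact q (n + 1) = qFact q n * qInt q ((n : ℤ) + 1) := by
  rw [qFact, qFact, Finset.prod_Icc_succ_top (by omega : 1 ≤ n + 1)]
  push_cast
  ring

lemma qFact_pos (hq0 : 0 < q) (hq1 : q < 1) (n : ℕ) : 0 < qFact q n := by
  induction n with
  | zero => simp [qFact_zero]
  | succ n ih =>
    rw [qFact_succ]
    have : 0 < qInt q ((n : ℤ) + 1) := by
      have := qInt_pos hq0 hq1 (k := n + 1) (by omega)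
      push_cast at this ⊢
      convert this using 2
    exact mul_pos ih this

lemma qBinom_zero_right (hq0 : 0 < q) (hq1 : q < 1) (n : ℕ) : qBinom q n 0 = 1 := by
  rw [qBinom, qFact_zero]
  simp [div_self (qFact_pos hq0 hq1 n).ne']

lemma qBinom_self (hq0 : 0 < q) (hq1 : q < 1) (n : ℕ) : qBinom q n n = 1 := by
  rw [qBinom]
  simp [qFact_zero, div_self (qFact_pos hq0 hq1 n).ne']

end Helpers

section Helpers2

variable {q : ℝ}

lemma two_bb (k : ℕ) : 2 * bb k = k * (k - 1) := by
  rw [bb]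
  rcases k with _ | a
  · simp
  · have he : 2 ∣ (a + 1) * (a + 1 - 1) := by
      simp only [Nat.add_sub_cancel]
      rcases Nat.even_or_odd a with h | h
      · exact Dvd.dvd.mul_left h.two_dvd _
      · exact Dvd.dvd.mul_right (Odd.add_one h).two_dvd _
    exact Nat.mul_div_cancel' he

lemma bb_succ (k : ℕ) : bb (k + 1) = bb k + k := by
  have h1 := two_bb k
  have h2 := two_bb (k + 1)
  simp only [Nat.add_sub_cancel] at h2
  have h3 : k * (k - 1) + 2 * k = (k + 1) * k := by
    rcases k with _ | a
    · simp
    · simp only [Nat.add_sub_cancel]; ring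
  omega

lemma bb_add (z m : ℕ) : bb (z + m) = bb z + bb m + z * m := by
  induction m with
  | zero => simp [bb]
  | succ m ih =>
    have : z + (m + 1) = (z + m) + 1 := by ring
    rw [this, bb_succ, ih, bb_succ, Nat.mul_succ]
    ring

lemma oplus_eq_range (α : ℝ) (m : ℕ) : oplus q α m = ∏ i ∈ range m, (1 + α * q ^ i) := by
  induction m with
  | zero => simp [oplus]
  | succ m ih =>
    rw [oplus, Finset.prod_Icc_succ_top (by omega : 1 ≤ m + 1), ← oplus, ih,
      Finset.prod_range_succ, Nat.add_sub_cancel]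

lemma oplus_pos {α : ℝ} (hq0 : 0 < q) (hα : 0 < α) (m : ℕ) : 0 < oplus q α m := by
  rw [oplus_eq_range]
  apply Finset.prod_pos
  intro i _
  positivity

lemma prodIco_pos {α : ℝ} (hq0 : 0 < q) (hα : 0 < α) (a b : ℕ) :
    0 < ∏ i ∈ Ico a b, (1 + α * q ^ i) := by
  apply Finset.prod_pos
  intro i _
  positivity

lemma oplus_succ' (α : ℝ) (n : ℕ) :
    oplus q α (n + 1) = (1 + α) * oplus q (α * q) n := by
  rw [oplus_eq_range, oplus_eq_range, Finset.prod_range_succ']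
  simp only [pow_zero, mul_one]
  rw [mul_comm]
  congr 1
  apply Finset.prod_congr rfl
  intro i _
  rw [pow_succ]
  ring

lemma qPascal (hq0 : 0 < q) (hq1 : q < 1) {j n : ℕ} (hj : j < n) :
    qBinom q (n + 1) (j + 1) = q ^ (j + 1) * qBinom q n (j + 1) + qBinom q n j := by
  have hsub1 : n + 1 - (j + 1) = n - j := by omega
  have hsub2 : n - j = (n - j - 1) + 1 := by omega
  have hkey : qInt q ((n : ℤ) + 1) = qInt q ((j : ℤ) + 1) + q ^ (j + 1 : ℕ) * qInt q ((n : ℤ) - j) := by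
    have := qInt_add hq0 hq1 ((j : ℤ) + 1) ((n : ℤ) - j)
    have he : ((j : ℤ) + 1) + ((n : ℤ) - j) = (n : ℤ) + 1 := by ring
    rw [he] at this
    rw [this, zpow_add₀ hq0.ne', zpow_one, zpow_natCast]
    ring
  have e1 : qFact q (n + 1) = qFact q n * qInt q ((n : ℤ) + 1) := qFact_succ n
  have e2 : qFact q (j + 1) = qFact q j * qInt q ((j : ℤ) + 1) := qFact_succ j
  have e3 : qFact q (n - j) = qFact q (n - j - 1) * qInt q ((n : ℤ) - j) := by
    rw [hsub2, qFact_succ]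
    congr 1
    have hc : ((n - j - 1 : ℕ) : ℤ) = (n : ℤ) - j - 1 := by omega
    rw [hc]
    congr 1
    ring
  have e4 : n - (j + 1) = n - j - 1 := by omega
  have hfj := (qFact_pos hq0 hq1 j).ne'
  have hfn1 := (qFact_pos hq0 hq1 (n - j - 1)).ne'
  have hij : qInt q ((j : ℤ) + 1) ≠ 0 := by
    have := (qInt_pos hq0 hq1 (k := j + 1) (by omega)).ne'
    push_cast at this
    exact this
  have hinj : qInt q ((n : ℤ) - j) ≠ 0 := by
    have h := (qInt_pos hq0 hq1 (k := n - j) (by omega)).ne'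
    have hc : ((n - j : ℕ) : ℤ) = (n : ℤ) - j := by omega
    rwa [hc] at h
  rw [qBinom, qBinom, qBinom, hsub1, e4, e1, e2, e3, hkey]
  field_simp
  ring

end Helpers2

lemma lemA {q : ℝ} (hq0 : 0 < q) (hq1 : q < 1) :
    ∀ (n : ℕ) (α : ℝ), (∑ y ∈ range (n + 1), qBinom q n y * α ^ y * q ^ (bb y)) = oplus q α n := by
  intro n
  induction n with
  | zero =>
    intro α
    simp [qBinom_zero_right hq0 hq1, bb, oplus]
  | succ n ih =>
    intro α
    have hL : ∑ y ∈ range (n + 2), qBinom q (n + 1) y * α ^ y * q ^ (bb y)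
        = 1 + ((∑ y ∈ range n, qBinom q (n + 1) (y + 1) * α ^ (y + 1) * q ^ (bb (y + 1)))
            + α ^ (n + 1) * q ^ (bb (n + 1))) := by
      rw [Finset.sum_range_succ' _ (n + 1), Finset.sum_range_succ]
      rw [qBinom_zero_right hq0 hq1, qBinom_self hq0 hq1]
      simp [bb]
      ring
    have hmid : ∑ y ∈ range n, qBinom q (n + 1) (y + 1) * α ^ (y + 1) * q ^ (bb (y + 1))
        = (∑ y ∈ range n, qBinom q n (y + 1) * (α * q) ^ (y + 1) * q ^ (bb (y + 1)))
          + α * ∑ y ∈ range n, qBinom q n y * (α * q) ^ y * q ^ (bb y) := by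
      rw [Finset.mul_sum, ← Finset.sum_add_distrib]
      apply Finset.sum_congr rfl
      intro y hy
      rw [qPascal hq0 hq1 (Finset.mem_range.mp hy), bb_succ, pow_add, pow_add, mul_pow,
        mul_pow, pow_add]
      ring
    have hS1 : (∑ y ∈ range (n + 1), qBinom q n y * (α * q) ^ y * q ^ (bb y))
        = 1 + ∑ y ∈ range n, qBinom q n (y + 1) * (α * q) ^ (y + 1) * q ^ (bb (y + 1)) := by
      rw [Finset.sum_range_succ' _ n, qBinom_zero_right hq0 hq1]
      simp [bb]
      ring
    have hS2 : (∑ y ∈ range (n + 1), qBinom q n y * (α * q) ^ y * q ^ (bb y))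
        = (∑ y ∈ range n, qBinom q n y * (α * q) ^ y * q ^ (bb y))
          + (α * q) ^ n * q ^ (bb n) := by
      rw [Finset.sum_range_succ, qBinom_self hq0 hq1]
      ring
    rw [oplus_succ', ← ih (α * q)]
    have : (1 + α) * (∑ y ∈ range (n + 1), qBinom q n y * (α * q) ^ y * q ^ (bb y))
        = (∑ y ∈ range (n + 1), qBinom q n y * (α * q) ^ y * q ^ (bb y))
          + α * (∑ y ∈ range (n + 1), qBinom q n y * (α * q) ^ y * q ^ (bb y)) := by ring
    rw [hL, hmid, this]
    nth_rewrite 1 [hS1]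
    nth_rewrite 1 [hS2]
    rw [mul_add, bb_succ, pow_add, mul_pow, pow_add]
    ring

section Helpers3

variable {q : ℝ}

lemma qFall_zero_order (u : ℤ) : qFall q u 0 = 1 := by simp [qFall]

lemma qFall_succ (u : ℤ) (m : ℕ) :
    qFall q u (m + 1) = qFall q u m * qInt q (u - (m + 1) + 1) := by
  rw [qFall, qFall, Finset.prod_Icc_succ_top (by omega : 1 ≤ m + 1)]
  congr 2

lemma qFall_eq_zero {y m : ℕ} (h : y < m) : qFall q (y : ℤ) m = 0 := by
  rw [qFall]
  apply Finset.prod_eq_zero (i := y + 1)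
  · simp only [Finset.mem_Icc]; omega
  · have : (y : ℤ) - (↑(y + 1) : ℤ) + 1 = 0 := by push_cast; ring
    rw [this, qInt_zero]

lemma qFall_nat (hq0 : 0 < q) (hq1 : q < 1) {m y : ℕ} (h : m ≤ y) :
    qFall q (y : ℤ) m = qFact q y / qFact q (y - m) := by
  induction m with
  | zero => simp [qFall_zero_order, div_self (qFact_pos hq0 hq1 y).ne']
  | succ m ih =>
    have hm : m ≤ y := by omega
    rw [qFall_succ, ih hm]
    have h1 : y - m = (y - (m + 1)) + 1 := by omega
    have h2 : qFact q (y - m) = qFact q (y - (m + 1)) * qInt q ((y : ℤ) - (m + 1) + 1) := by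
      rw [h1, qFact_succ]
      congr 1
      congr 1
      omega
    rw [h2]
    have h3 := (qFact_pos hq0 hq1 (y - (m + 1))).ne'
    have h4 : qInt q ((y : ℤ) - (m + 1) + 1) ≠ 0 := by
      have := (qInt_pos hq0 hq1 (k := y - m) (by omega)).ne'
      have hc : ((y - m : ℕ) : ℤ) = (y : ℤ) - (m + 1) + 1 := by omega
      rwa [hc] at this
    field_simp

lemma qFall_add (u : ℤ) (a b : ℕ) :
    qFall q u (a + b) = qFall q u a * qFall q (u - a) b := by
  induction b with
  | zero => simp [qFall_zero_order]
  | succ b ih =>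
    have : a + (b + 1) = (a + b) + 1 := by omega
    rw [this, qFall_succ, ih, qFall_succ]
    have hc : u - (↑a + ↑b + 1) + 1 = u - ↑a - (↑b + 1) + 1 := by ring
    push_cast
    rw [hc]
    ring

lemma shift1 (hq0 : 0 < q) (hq1 : q < 1) {m y N : ℕ} (h1 : m ≤ y) (h2 : y ≤ N) :
    qFall q (y : ℤ) m * qBinom q N y = qFall q (N : ℤ) m * qBinom q (N - m) (y - m) := by
  rw [qFall_nat hq0 hq1 h1, qFall_nat hq0 hq1 (le_trans h1 h2), qBinom, qBinom]
  have e : N - m - (y - m) = N - y := by omega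
  rw [e]
  have p1 := (qFact_pos hq0 hq1 (y - m)).ne'
  have p2 := (qFact_pos hq0 hq1 (N - m)).ne'
  have p3 := (qFact_pos hq0 hq1 (N - y)).ne'
  have p4 := (qFact_pos hq0 hq1 y).ne'
  field_simp

lemma shift2 (hq0 : 0 < q) (hq1 : q < 1) {m y N : ℕ} (h : y + m ≤ N) :
    qFall q ((N - y : ℕ) : ℤ) m * qBinom q N y = qFall q (N : ℤ) m * qBinom q (N - m) y := by
  rw [qFall_nat hq0 hq1 (by omega : m ≤ N - y), qFall_nat hq0 hq1 (by omega : m ≤ N), qBinom, qBinom]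
  have e : N - y - m = N - m - y := by omega
  rw [e]
  have p1 := (qFact_pos hq0 hq1 y).ne'
  have p2 := (qFact_pos hq0 hq1 (N - m)).ne'
  have p3 := (qFact_pos hq0 hq1 (N - m - y)).ne'
  have p4 := (qFact_pos hq0 hq1 (N - y)).ne'
  field_simp

lemma lemB (hq0 : 0 < q) (hq1 : q < 1) (N m : ℕ) (α : ℝ) :
    ∑ y ∈ range (N + 1), qFall q (y : ℤ) m * qBinom q N y * α ^ y * q ^ (bb y)
      = qFall q (N : ℤ) m * α ^ m * q ^ (bb m) * ∏ i ∈ Ico m N, (1 + α * q ^ i) := by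
  by_cases hmN : m ≤ N
  · have hz : ∀ y ∈ range m, qFall q (y : ℤ) m * qBinom q N y * α ^ y * q ^ (bb y) = 0 := by
      intro y hy
      rw [qFall_eq_zero (Finset.mem_range.mp hy)]
      ring
    have hsplit : ∑ y ∈ range (N + 1), qFall q (y : ℤ) m * qBinom q N y * α ^ y * q ^ (bb y)
        = ∑ y ∈ Ico m (N + 1), qFall q (y : ℤ) m * qBinom q N y * α ^ y * q ^ (bb y) := by
      rw [Finset.range_eq_Ico, ← Finset.sum_Ico_consecutive _ (Nat.zero_le m) (by omega : m ≤ N + 1),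
        ← Finset.range_eq_Ico, Finset.sum_eq_zero hz, zero_add]
    rw [hsplit, Finset.sum_Ico_eq_sum_range]
    have hNm : N + 1 - m = (N - m) + 1 := by omega
    rw [hNm]
    have hterm : ∀ z ∈ range ((N - m) + 1),
        qFall q ((m + z : ℕ) : ℤ) m * qBinom q N (m + z) * α ^ (m + z) * q ^ (bb (m + z))
        = (qFall q (N : ℤ) m * α ^ m * q ^ (bb m)) * (qBinom q (N - m) z * (α * q ^ m) ^ z * q ^ (bb z)) := by
      intro z hz2
      have hz3 : z ≤ N - m := by have := Finset.mem_range.mp hz2; omega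
      have h1 : m ≤ m + z := by omega
      have h2 : m + z ≤ N := by omega
      have := shift1 hq0 hq1 h1 h2
      have he : m + z - m = z := by omega
      rw [he] at this
      calc qFall q ((m + z : ℕ) : ℤ) m * qBinom q N (m + z) * α ^ (m + z) * q ^ (bb (m + z))
          = (qFall q ((m + z : ℕ) : ℤ) m * qBinom q N (m + z)) * (α ^ (m + z) * q ^ (bb (m + z))) := by ring
        _ = (qFall q (N : ℤ) m * qBinom q (N - m) z) * (α ^ (m + z) * q ^ (bb (m + z))) := by rw [this]
        _ = _ := by
            rw [bb_add, pow_add, pow_add, pow_add, mul_pow, ← pow_mul]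
            ring
    rw [Finset.sum_congr rfl hterm, ← Finset.mul_sum, lemA hq0 hq1 (N - m) (α * q ^ m),
      oplus_eq_range, Finset.prod_Ico_eq_prod_range]
    congr 1
    apply Finset.prod_congr rfl
    intro i _
    rw [pow_add]
    ring
  · push_neg at hmN
    have hz : ∀ y ∈ range (N + 1), qFall q (y : ℤ) m * qBinom q N y * α ^ y * q ^ (bb y) = 0 := by
      intro y hy
      have hym : y < m := by have := Finset.mem_range.mp hy; omega
      rw [qFall_eq_zero hym]
      ring
    rw [Finset.sum_eq_zero hz, qFall_eq_zero (by omega : N < m)]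
    ring

end Helpers3

section Helpers4

variable {q : ℝ}

lemma qTri_split (hq0 : 0 < q) (hq1 : q < 1) (n y1 y2 : ℕ) :
    qTri q n y1 y2 = qBinom q n y1 * qBinom q (n - y1) y2 := by
  rw [qTri, qBinom, qBinom]
  have e : n - y1 - y2 = (n - y1) - y2 := rfl
  have p1 := (qFact_pos hq0 hq1 y1).ne'
  have p2 := (qFact_pos hq0 hq1 y2).ne'
  have p3 := (qFact_pos hq0 hq1 (n - y1)).ne'
  have p4 := (qFact_pos hq0 hq1 (n - y1 - y2)).ne'
  field_simp

lemma prodIcc_shift (α : ℝ) (c m : ℕ) :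
    ∏ i ∈ Icc 1 m, (1 + α * q ^ (c + i - 1)) = ∏ i ∈ Ico c (c + m), (1 + α * q ^ i) := by
  induction m with
  | zero => simp
  | succ m ih =>
    rw [Finset.prod_Icc_succ_top (by omega : 1 ≤ m + 1), ih,
      show c + (m + 1) = (c + m) + 1 from rfl,
      Finset.prod_Ico_succ_top (by omega : c ≤ c + m)]
    congr 2

end Helpers4

theorem stmt3 (q : ℝ) (hq0 : 0 < q) (hq1 : q < 1) (n : ℕ) (α1 α2 : ℝ)
    (hα1 : 0 < α1) (hα1' : α1 < 1) (hα2 : 0 < α2) (hα2' : α2 < 1)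
    (m1 m2 : ℕ) (hm2 : m2 ≤ n) (hm1 : m1 ≤ n - m2) :
    ∑ y1 ∈ Finset.range (n + 1), ∑ y2 ∈ Finset.range (n - y1 + 1),
      qFall q (y1 : ℤ) m1 * qFall q (y2 : ℤ) m2 * fpmf q α1 α2 n y1 y2
      = qFall q (n : ℤ) (m1 + m2) * α1 ^ m1 * α2 ^ m2 * q ^ (bb m1 + bb m2) /
        (oplus q α1 m1 * oplus q α2 m2 *
          ∏ i ∈ Finset.Icc 1 m2, (1 + α1 * q ^ (n - m2 + i - 1))) := by
  have hm12 : m1 + m2 ≤ n := by omega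
  set C2 : ℝ := α2 ^ m2 * q ^ (bb m2) / oplus q α2 m2 with hC2
  -- Step 1 : inner sums
  have step1 : ∀ y1 ∈ range (n + 1),
      (∑ y2 ∈ range (n - y1 + 1),
        qFall q (y1 : ℤ) m1 * qFall q (y2 : ℤ) m2 * fpmf q α1 α2 n y1 y2)
      = qFall q (y1 : ℤ) m1 * qFall q ((n - y1 : ℕ) : ℤ) m2 * qBinom q n y1 * α1 ^ y1 *
          q ^ (bb y1) * C2 / oplus q α1 n := by
    intro y1 _
    have hterm : ∀ y2 ∈ range (n - y1 + 1),
        qFall q (y1 : ℤ) m1 * qFall q (y2 : ℤ) m2 * fpmf q α1 α2 n y1 y2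
        = (qFall q (y1 : ℤ) m1 * qBinom q n y1 * α1 ^ y1 * q ^ (bb y1) /
            (oplus q α1 n * oplus q α2 (n - y1)))
          * (qFall q (y2 : ℤ) m2 * qBinom q (n - y1) y2 * α2 ^ y2 * q ^ (bb y2)) := by
      intro y2 _
      rw [fpmf, qTri_split hq0 hq1, pow_add]
      ring
    rw [Finset.sum_congr rfl hterm, ← Finset.mul_sum, lemB hq0 hq1 (n - y1) m2 α2]
    rcases le_or_gt m2 (n - y1) with hc | hc
    · have hsplit : oplus q α2 (n - y1) = oplus q α2 m2 * ∏ i ∈ Ico m2 (n - y1), (1 + α2 * q ^ i) := by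
        rw [oplus_eq_range, oplus_eq_range, Finset.range_eq_Ico, Finset.range_eq_Ico,
          Finset.prod_Ico_consecutive _ (Nat.zero_le m2) hc]
      rw [hsplit, hC2]
      have n1 := (oplus_pos hq0 hα1 n).ne'
      have n2 := (oplus_pos hq0 hα2 m2).ne'
      have n3 := (prodIco_pos hq0 hα2 m2 (n - y1)).ne'
      field_simp
    · rw [qFall_eq_zero hc]
      ring
  rw [Finset.sum_congr rfl step1]
  -- Step 2 : restrict the outer sum
  have hsub : range (n - m2 + 1) ⊆ range (n + 1) := by
    apply Finset.range_subset_range.mpr; omega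
  rw [← Finset.sum_subset hsub (by
    intro y1 hy1 hy1'
    have h1 : n - y1 < m2 := by
      have ha := Finset.mem_range.mp hy1
      have hb : ¬ (y1 < n - m2 + 1) := fun h => hy1' (Finset.mem_range.mpr h)
      omega
    rw [qFall_eq_zero h1]
    simp)]
  -- Step 3 : shift
  have step3 : ∀ y1 ∈ range (n - m2 + 1),
      qFall q (y1 : ℤ) m1 * qFall q ((n - y1 : ℕ) : ℤ) m2 * qBinom q n y1 * α1 ^ y1 *
          q ^ (bb y1) * C2 / oplus q α1 n
      = (qFall q (n : ℤ) m2 * C2 / oplus q α1 n)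
        * (qFall q (y1 : ℤ) m1 * qBinom q (n - m2) y1 * α1 ^ y1 * q ^ (bb y1)) := by
    intro y1 hy1
    have hy1' : y1 + m2 ≤ n := by have := Finset.mem_range.mp hy1; omega
    have := shift2 hq0 hq1 (m := m2) (y := y1) (N := n) hy1'
    calc qFall q (y1 : ℤ) m1 * qFall q ((n - y1 : ℕ) : ℤ) m2 * qBinom q n y1 * α1 ^ y1 *
          q ^ (bb y1) * C2 / oplus q α1 n
        = (qFall q ((n - y1 : ℕ) : ℤ) m2 * qBinom q n y1) * qFall q (y1 : ℤ) m1 * α1 ^ y1 *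
          q ^ (bb y1) * C2 / oplus q α1 n := by ring
      _ = (qFall q (n : ℤ) m2 * qBinom q (n - m2) y1) * qFall q (y1 : ℤ) m1 * α1 ^ y1 *
          q ^ (bb y1) * C2 / oplus q α1 n := by rw [this]
      _ = _ := by ring
  rw [Finset.sum_congr rfl step3, ← Finset.mul_sum, lemB hq0 hq1 (n - m2) m1 α1]
  -- Step 4 : final algebra
  have hfall : qFall q (n : ℤ) (m1 + m2) = qFall q (n : ℤ) m2 * qFall q ((n - m2 : ℕ) : ℤ) m1 := by
    rw [add_comm m1 m2, qFall_add]
    congr 2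
    omega
  have hQ : (∏ i ∈ Finset.Icc 1 m2, (1 + α1 * q ^ (n - m2 + i - 1)))
      = ∏ i ∈ Ico (n - m2) n, (1 + α1 * q ^ i) := by
    have he : n - m2 + m2 = n := by omega
    rw [prodIcc_shift, he]
  have hsplitn : oplus q α1 n
      = oplus q α1 m1 * (∏ i ∈ Ico m1 (n - m2), (1 + α1 * q ^ i))
        * ∏ i ∈ Ico (n - m2) n, (1 + α1 * q ^ i) := by
    rw [oplus_eq_range, oplus_eq_range, Finset.range_eq_Ico, Finset.range_eq_Ico,
      Finset.prod_Ico_consecutive _ (Nat.zero_le m1) hm1,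
      Finset.prod_Ico_consecutive _ (Nat.zero_le (n - m2)) (by omega : n - m2 ≤ n)]
  rw [hfall, hQ, hsplitn, hC2, pow_add]
  have n1 := (oplus_pos hq0 hα1 m1).ne'
  have n2 := (oplus_pos hq0 hα2 m2).ne'
  have n3 := (prodIco_pos hq0 hα1 m1 (n - m2)).ne'
  have n4 := (prodIco_pos hq0 hα1 (n - m2) n).ne'
  field_simp
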